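/- Monotonicity under partial trace: for strictly positive ρ_AB, σ_AB on a bipartite system with partial traces ρ_A = Tr_B(ρ_AB), σ_A = Tr_B(σ_AB) also strictly positive, S_f(ρ_AB‖σ_AB) ≥ S_f(ρ_A‖σ_A) for any operator convex f defined on the relevant spectra. -/

import Mathlib

open Matrix Kronecker
open scoped ComplexOrder

noncomputable def applyFun {n : Type*} [Fintype n] [DecidableEq n]
    (f : ℝ → ℝ) (A : Matrix n n ℂ) : Matrix n n ℂ := by
  classical exact
    if hA : A.IsHermitian then
      (hA.eigenvectorUnitary : Matrix n n ℂ) *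
        Matrix.diagonal (fun i => (f (hA.eigenvalues i) : ℂ)) *
        (star (hA.eigenvectorUnitary : Matrix n n ℂ))
    else 0

noncomputable def msqrt {n : Type*} [Fintype n] [DecidableEq n]
    (A : Matrix n n ℂ) : Matrix n n ℂ := by
  classical exact if h : A.PosSemidef then
    (h.1.eigenvectorUnitary : Matrix n n ℂ) *
      Matrix.diagonal ((↑) ∘ (fun x : ℝ => Real.sqrt x) ∘ h.1.eigenvalues) *
      (star h.1.eigenvectorUnitary : Matrix n n ℂ) else 0

def vecOf {m n : Type*} (A : Matrix m n ℂ) : m × n → ℂ := fun p => A p.1 p.2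

noncomputable def Srel {n : Type*} [Fintype n] [DecidableEq n]
    (f : ℝ → ℝ) (ρ σ : Matrix n n ℂ) : ℝ :=
  (star (vecOf (msqrt ρ)) ⬝ᵥ (applyFun f (σ ⊗ₖ (ρ⁻¹)ᵀ) *ᵥ vecOf (msqrt ρ))).re

def OperatorConvexOn (I : Set ℝ) (f : ℝ → ℝ) : Prop :=
  ∀ (n : ℕ) (A B : Matrix (Fin n) (Fin n) ℂ) (hA : A.IsHermitian) (hB : B.IsHermitian),
    (∀ i, hA.eigenvalues i ∈ I) → (∀ i, hB.eigenvalues i ∈ I) →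
    ∀ lam : ℝ, 0 ≤ lam → lam ≤ 1 →
      ((lam : ℂ) • applyFun f A + ((1 - lam : ℝ) : ℂ) • applyFun f B -
        applyFun f ((lam : ℂ) • A + ((1 - lam : ℝ) : ℂ) • B)).PosSemidef

noncomputable def entf {n : Type*} [Fintype n] [DecidableEq n]
    (f : ℝ → ℝ) (ρ : Matrix n n ℂ) : ℝ :=
  -(Matrix.trace (ρ * applyFun f ρ⁻¹)).re

noncomputable def ptraceB {α β : Type*} [Fintype β]
    (M : Matrix (α × β) (α × β) ℂ) : Matrix α α ℂ :=
  Matrix.of fun i j => ∑ k, M (i, k) (j, k)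

noncomputable def ptraceA {α β : Type*} [Fintype α]
    (M : Matrix (α × β) (α × β) ℂ) : Matrix β β ℂ :=
  Matrix.of fun i j => ∑ k, M (k, i) (k, j)

def NonAffineOn (I : Set ℝ) (f : ℝ → ℝ) : Prop :=
  ¬ ∃ c b : ℝ, ∀ t ∈ I, f t = c * t + b

lemma msqrt_isHermitian {n : Type*} [Fintype n] [DecidableEq n] {A : Matrix n n ℂ}
    (h : A.PosSemidef) : (msqrt A).IsHermitian := by
  unfold msqrt
  rw [dif_pos h]
  set U := (h.1.eigenvectorUnitary : Matrix n n ℂ) with hUdef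
  change (U * Matrix.diagonal (((↑) ∘ (fun x : ℝ => Real.sqrt x) ∘ h.1.eigenvalues) : n → ℂ) * star U).IsHermitian
  have hD : (Matrix.diagonal (((↑) ∘ (fun x : ℝ => Real.sqrt x) ∘ h.1.eigenvalues) : n → ℂ))ᴴ
      = Matrix.diagonal ((↑) ∘ (fun x : ℝ => Real.sqrt x) ∘ h.1.eigenvalues) := by
    rw [Matrix.diagonal_conjTranspose]
    congr 1
    funext i
    simp
  unfold Matrix.IsHermitian
  rw [Matrix.conjTranspose_mul, Matrix.conjTranspose_mul, hD, Matrix.star_eq_conjTranspose,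
    Matrix.conjTranspose_conjTranspose, Matrix.mul_assoc]

lemma msqrt_mul_self {n : Type*} [Fintype n] [DecidableEq n] {A : Matrix n n ℂ}
    (h : A.PosSemidef) : msqrt A * msqrt A = A := by
  unfold msqrt
  rw [dif_pos h]
  set U := (h.1.eigenvectorUnitary : Matrix n n ℂ) with hUdef
  have hU2 : star U * U = 1 := Matrix.mem_unitaryGroup_iff'.mp h.1.eigenvectorUnitary.2
  have hsp : A = U * Matrix.diagonal (RCLike.ofReal ∘ h.1.eigenvalues) * star U :=
    h.1.spectral_theorem
  set D := (Matrix.diagonal ((↑) ∘ (fun x : ℝ => Real.sqrt x) ∘ h.1.eigenvalues) : Matrix n n ℂ)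
    with hDdef
  have hDD : D * D = Matrix.diagonal (RCLike.ofReal ∘ h.1.eigenvalues) := by
    rw [hDdef, Matrix.diagonal_mul_diagonal]
    congr 1
    funext i
    show ((Real.sqrt (h.1.eigenvalues i) : ℝ) : ℂ) * ((Real.sqrt (h.1.eigenvalues i) : ℝ) : ℂ)
      = ((h.1.eigenvalues i : ℝ) : ℂ)
    rw [← Complex.ofReal_mul, Real.mul_self_sqrt (h.eigenvalues_nonneg i)]
  change U * D * star U * (U * D * star U) = A
  conv_rhs => rw [hsp]
  rw [show U * D * star U * (U * D * star U) = U * (D * (star U * U) * D) * star U by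
    simp only [Matrix.mul_assoc], hU2, Matrix.mul_one, hDD]


open Polynomial

section S1
variable {n m : Type*} [Fintype n] [DecidableEq n] [Fintype m] [DecidableEq m]

/-- conjugation by a unitary as an algebra hom -/
noncomputable def conjAH (u : Matrix n n ℂ) (h1 : u * star u = 1) (h2 : star u * u = 1) :
    Matrix n n ℂ →ₐ[ℂ] Matrix n n ℂ where
  toFun A := star u * A * u
  map_one' := by simpa using h2
  map_mul' A B := by
    simp only [Matrix.mul_assoc]
    rw [← Matrix.mul_assoc u (star u), h1, Matrix.one_mul]
  map_zero' := by simp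
  map_add' A B := by noncomm_ring
  commutes' c := by
    simp only [Algebra.algebraMap_eq_smul_one, Matrix.mul_smul, Matrix.smul_mul, Matrix.mul_one, h2]

lemma aeval_conj (u : Matrix n n ℂ) (h1 : u * star u = 1) (h2 : star u * u = 1)
    (A : Matrix n n ℂ) (p : ℂ[X]) :
    aeval (star u * A * u) p = star u * aeval A p * u := by
  have := aeval_algHom_apply (conjAH u h1 h2) A p
  simpa [conjAH] using this

lemma applyFun_eq_aeval {f : ℝ → ℝ} {A : Matrix n n ℂ} (hA : A.IsHermitian)
    (p : ℝ[X]) (hp : ∀ i, p.eval (hA.eigenvalues i) = f (hA.eigenvalues i)) :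
    applyFun f A = aeval A (p.map (algebraMap ℝ ℂ)) := by
  classical
  set U := (hA.eigenvectorUnitary : Matrix n n ℂ) with hUdef
  have hU1 : U * star U = 1 := Matrix.mem_unitaryGroup_iff.mp hA.eigenvectorUnitary.2
  have hU2 : star U * U = 1 := Matrix.mem_unitaryGroup_iff'.mp hA.eigenvectorUnitary.2
  have hsp : A = U * Matrix.diagonal (RCLike.ofReal ∘ hA.eigenvalues) * star U :=
    hA.spectral_theorem
  have hconj := aeval_conj (star U) (by simpa using hU2) (by simpa using hU1)
    (Matrix.diagonal (RCLike.ofReal ∘ hA.eigenvalues)) (p.map (algebraMap ℝ ℂ))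
  rw [star_star] at hconj
  have hdiag : aeval (Matrix.diagonal (RCLike.ofReal ∘ hA.eigenvalues) : Matrix n n ℂ)
      (p.map (algebraMap ℝ ℂ))
      = Matrix.diagonal (fun i => aeval ((hA.eigenvalues i : ℝ) : ℂ) (p.map (algebraMap ℝ ℂ))) := by
    have h := aeval_algHom_apply (Matrix.diagonalAlgHom (n := n) (α := ℂ) ℂ)
      (fun i => ((hA.eigenvalues i : ℝ) : ℂ)) (p.map (algebraMap ℝ ℂ))
    have h2 : ∀ i, (aeval (fun i => ((hA.eigenvalues i : ℝ) : ℂ)) (p.map (algebraMap ℝ ℂ))) i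
        = aeval ((hA.eigenvalues i : ℝ) : ℂ) (p.map (algebraMap ℝ ℂ)) := fun i =>
      (aeval_algHom_apply (Pi.evalAlgHom ℂ (fun _ : n => ℂ) i)
        (fun j => ((hA.eigenvalues j : ℝ) : ℂ)) (p.map (algebraMap ℝ ℂ))).symm
    rw [show (RCLike.ofReal ∘ hA.eigenvalues : n → ℂ) = fun i => ((hA.eigenvalues i : ℝ) : ℂ) from rfl]
    rw [show (Matrix.diagonalAlgHom (n := n) (α := ℂ) ℂ) (fun i => ((hA.eigenvalues i : ℝ) : ℂ))
      = Matrix.diagonal (fun i => ((hA.eigenvalues i : ℝ) : ℂ)) from rfl] at h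
    rw [h, Matrix.diagonalAlgHom_apply]
    exact congrArg Matrix.diagonal (funext h2)
  have hentry : ∀ i, aeval ((hA.eigenvalues i : ℝ) : ℂ) (p.map (algebraMap ℝ ℂ))
      = ((f (hA.eigenvalues i) : ℝ) : ℂ) := by
    intro i
    rw [aeval_map_algebraMap,
      show ((hA.eigenvalues i : ℝ) : ℂ) = algebraMap ℝ ℂ (hA.eigenvalues i) from rfl,
      aeval_algebraMap_apply_eq_algebraMap_eval, hp i]
    rfl
  conv_rhs => rw [hsp, hconj, hdiag]
  show (if hA' : A.IsHermitian then _ else _) = _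
  rw [dif_pos hA]
  have he : (fun i => ((f (hA.eigenvalues i) : ℝ) : ℂ))
      = fun i => aeval ((hA.eigenvalues i : ℝ) : ℂ) (p.map (algebraMap ℝ ℂ)) :=
    funext fun i => (hentry i).symm
  rw [he]


end S1

section S2
variable {n m : Type*} [Fintype n] [DecidableEq n] [Fintype m] [DecidableEq m]

lemma applyFun_eq_aeval_of_nodes {f : ℝ → ℝ} {A : Matrix n n ℂ} (hA : A.IsHermitian)
    (s : Finset ℝ) (hs : ∀ i, hA.eigenvalues i ∈ s) :
    applyFun f A = aeval A ((Lagrange.interpolate s id f).map (algebraMap ℝ ℂ)) :=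
  applyFun_eq_aeval hA _ (fun i =>
    Lagrange.eval_interpolate_at_node f (Set.injOn_id _) (hs i))

lemma isHermitian_conj {A : Matrix n n ℂ} (hA : A.IsHermitian) (u : Matrix n n ℂ) :
    (star u * A * u).IsHermitian := by
  simp [Matrix.IsHermitian, Matrix.conjTranspose_mul, Matrix.mul_assoc, hA.eq,
    Matrix.star_eq_conjTranspose]

lemma applyFun_conj {f : ℝ → ℝ} {A : Matrix n n ℂ} (hA : A.IsHermitian) (u : Matrix n n ℂ)
    (h1 : u * star u = 1) (h2 : star u * u = 1) :
    applyFun f (star u * A * u) = star u * applyFun f A * u := by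
  classical
  have hA' : (star u * A * u).IsHermitian := isHermitian_conj hA u
  set s : Finset ℝ := (Finset.univ.image hA.eigenvalues) ∪ (Finset.univ.image hA'.eigenvalues)
    with hsdef
  rw [applyFun_eq_aeval_of_nodes hA' s (fun i => Finset.mem_union_right _
      (Finset.mem_image_of_mem _ (Finset.mem_univ i))),
    applyFun_eq_aeval_of_nodes hA s (fun i => Finset.mem_union_left _
      (Finset.mem_image_of_mem _ (Finset.mem_univ i))),
    aeval_conj u h1 h2]

/-- block-diagonal embedding as an AlgHom -/
noncomputable def blockAH : (Matrix n n ℂ × Matrix m m ℂ) →ₐ[ℂ] Matrix (n ⊕ m) (n ⊕ m) ℂ where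
  toFun P := Matrix.fromBlocks P.1 0 0 P.2
  map_one' := Matrix.fromBlocks_one
  map_mul' P Q := by
    show Matrix.fromBlocks (P.1 * Q.1) 0 0 (P.2 * Q.2)
      = Matrix.fromBlocks P.1 0 0 P.2 * Matrix.fromBlocks Q.1 0 0 Q.2
    rw [Matrix.fromBlocks_multiply]
    simp
  map_zero' := by simp
  map_add' P Q := by
    show Matrix.fromBlocks (P.1 + Q.1) 0 0 (P.2 + Q.2)
      = Matrix.fromBlocks P.1 0 0 P.2 + Matrix.fromBlocks Q.1 0 0 Q.2
    rw [Matrix.fromBlocks_add]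
    simp
  commutes' c := by
    simp only [Algebra.algebraMap_eq_smul_one, Prod.smul_fst, Prod.smul_snd, Prod.fst_one,
      Prod.snd_one, ← Matrix.fromBlocks_one, Matrix.fromBlocks_smul]
    simp

lemma aeval_fromBlocks (A : Matrix n n ℂ) (B : Matrix m m ℂ) (p : ℂ[X]) :
    aeval (Matrix.fromBlocks A 0 0 B) p = Matrix.fromBlocks (aeval A p) 0 0 (aeval B p) := by
  have h := aeval_algHom_apply (blockAH (n := n) (m := m)) (A, B) p
  have h1 := aeval_algHom_apply (AlgHom.fst ℂ (Matrix n n ℂ) (Matrix m m ℂ)) (A, B) p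
  have h2 := aeval_algHom_apply (AlgHom.snd ℂ (Matrix n n ℂ) (Matrix m m ℂ)) (A, B) p
  have : aeval ((A, B) : Matrix n n ℂ × Matrix m m ℂ) p = (aeval A p, aeval B p) := by
    have e1 : (aeval ((A, B) : Matrix n n ℂ × Matrix m m ℂ) p).1 = aeval A p := h1.symm
    have e2 : (aeval ((A, B) : Matrix n n ℂ × Matrix m m ℂ) p).2 = aeval B p := h2.symm
    exact Prod.ext e1 e2
  rw [show Matrix.fromBlocks A 0 0 B = blockAH (n := n) (m := m) (A, B) from rfl, h, this]
  rfl

lemma isHermitian_fromBlocks {A : Matrix n n ℂ} {B : Matrix m m ℂ}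
    (hA : A.IsHermitian) (hB : B.IsHermitian) :
    (Matrix.fromBlocks A 0 0 B).IsHermitian := by
  unfold Matrix.IsHermitian
  rw [Matrix.fromBlocks_conjTranspose, hA.eq, hB.eq]
  simp

lemma applyFun_fromBlocks {f : ℝ → ℝ} {A : Matrix n n ℂ} {B : Matrix m m ℂ}
    (hA : A.IsHermitian) (hB : B.IsHermitian) :
    applyFun f (Matrix.fromBlocks A 0 0 B)
      = Matrix.fromBlocks (applyFun f A) 0 0 (applyFun f B) := by
  classical
  have hC : (Matrix.fromBlocks A 0 0 B).IsHermitian := isHermitian_fromBlocks hA hB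
  set s : Finset ℝ := (Finset.univ.image hA.eigenvalues) ∪ (Finset.univ.image hB.eigenvalues)
    ∪ (Finset.univ.image hC.eigenvalues) with hsdef
  rw [applyFun_eq_aeval_of_nodes hC s (fun i => Finset.mem_union_right _
      (Finset.mem_image_of_mem _ (Finset.mem_univ i))),
    applyFun_eq_aeval_of_nodes hA s (fun i => Finset.mem_union_left _
      (Finset.mem_union_left _ (Finset.mem_image_of_mem _ (Finset.mem_univ i)))),
    applyFun_eq_aeval_of_nodes hB s (fun i => Finset.mem_union_left _
      (Finset.mem_union_right _ (Finset.mem_image_of_mem _ (Finset.mem_univ i)))),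
    aeval_fromBlocks]

end S2

section S3
variable {n m : Type*} [Fintype n] [DecidableEq n] [Fintype m] [DecidableEq m]

lemma dot_conj (u A : Matrix n n ℂ) (x : n → ℂ) :
    star x ⬝ᵥ ((star u * A * u) *ᵥ x) = star (u *ᵥ x) ⬝ᵥ (A *ᵥ (u *ᵥ x)) := by
  rw [Matrix.star_mulVec, ← Matrix.dotProduct_mulVec, Matrix.mulVec_mulVec,
    Matrix.mulVec_mulVec, Matrix.star_eq_conjTranspose, Matrix.mul_assoc]

lemma posDef_conj {A : Matrix n n ℂ} (hA : A.PosDef) (u : Matrix n n ℂ)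
    (h2 : star u * u = 1) : (star u * A * u).PosDef := by
  refine Matrix.PosDef.of_dotProduct_mulVec_pos (isHermitian_conj hA.1 u) (fun x hx => ?_)
  rw [dot_conj]
  refine hA.dotProduct_mulVec_pos (fun h => hx ?_)
  have : star u *ᵥ (u *ᵥ x) = x := by rw [Matrix.mulVec_mulVec, h2, Matrix.one_mulVec]
  rw [← this, h, Matrix.mulVec_zero]

lemma posDef_fromBlocks {A : Matrix n n ℂ} {B : Matrix m m ℂ}
    (hA : A.PosDef) (hB : B.PosDef) : (Matrix.fromBlocks A 0 0 B).PosDef := by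
  refine Matrix.PosDef.of_dotProduct_mulVec_pos (isHermitian_fromBlocks hA.1 hB.1) (fun x hx => ?_)
  have hxe : x = Sum.elim (x ∘ Sum.inl) (x ∘ Sum.inr) := by funext i; cases i <;> rfl
  rw [hxe, Matrix.fromBlocks_mulVec, Function.star_sumElim,
    sumElim_dotProduct_sumElim]
  simp only [Matrix.zero_mulVec, add_zero, zero_add]
  rcases (show x ∘ Sum.inl ≠ 0 ∨ x ∘ Sum.inr ≠ 0 by
    by_contra h
    push_neg at h
    exact hx (by rw [hxe, h.1, h.2]; simp)) with h | h
  · exact add_pos_of_pos_of_nonneg (hA.dotProduct_mulVec_pos h) (hB.posSemidef.dotProduct_mulVec_nonneg _)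
  · exact add_pos_of_nonneg_of_pos (hA.posSemidef.dotProduct_mulVec_nonneg _) (hB.dotProduct_mulVec_pos h)

lemma posDef_reindex (e : n ≃ m) {A : Matrix n n ℂ} (hA : A.PosDef) :
    (Matrix.reindex e e A).PosDef := by
  refine Matrix.PosDef.of_dotProduct_mulVec_pos ((Matrix.isHermitian_submatrix_equiv e.symm).mpr hA.1) (fun x hx => ?_)
  rw [Matrix.reindex_apply, Matrix.submatrix_mulVec_equiv]
  have : star x ⬝ᵥ (A *ᵥ (x ∘ e.symm.symm)) ∘ e.symm
      = star (x ∘ e) ⬝ᵥ (A *ᵥ (x ∘ e)) := by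
    simp only [dotProduct, Equiv.symm_symm, Pi.star_apply, Function.comp_apply]
    exact (Fintype.sum_equiv e (fun i => star (x (e i)) * (A *ᵥ x ∘ ⇑e) i)
      (fun j => star (x j) * (A *ᵥ x ∘ ⇑e) (e.symm j)) (fun i => by simp)).symm
  rw [this]
  refine hA.dotProduct_mulVec_pos (fun h => hx ?_)
  funext j
  have := congrFun h (e.symm j)
  simpa using this

lemma applyFun_reindex {f : ℝ → ℝ} (e : n ≃ m) {A : Matrix n n ℂ} (hA : A.IsHermitian) :
    applyFun f (Matrix.reindex e e A) = Matrix.reindex e e (applyFun f A) := by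
  classical
  have hA' : (Matrix.reindex e e A).IsHermitian :=
    (Matrix.isHermitian_submatrix_equiv e.symm).mpr hA
  set s : Finset ℝ := (Finset.univ.image hA.eigenvalues) ∪ (Finset.univ.image hA'.eigenvalues)
    with hsdef
  rw [applyFun_eq_aeval_of_nodes hA' s (fun i => Finset.mem_union_right _
      (Finset.mem_image_of_mem _ (Finset.mem_univ i))),
    applyFun_eq_aeval_of_nodes hA s (fun i => Finset.mem_union_left _
      (Finset.mem_image_of_mem _ (Finset.mem_univ i)))]
  have h := aeval_algHom_apply ((Matrix.reindexAlgEquiv ℂ ℂ e).toAlgHom) A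
    ((Lagrange.interpolate s id f).map (algebraMap ℝ ℂ))
  exact h

end S3

section S4
variable {K H : Type*} [Fintype K] [DecidableEq K] [Fintype H] [DecidableEq H]

lemma isHermitian_conj_rect {A : Matrix K K ℂ} (hA : A.IsHermitian) (V : Matrix K H ℂ) :
    (Vᴴ * A * V).IsHermitian := by
  simp [Matrix.IsHermitian, Matrix.conjTranspose_mul, Matrix.mul_assoc, hA.eq]

lemma posSemidef_corner {X : Matrix K K ℂ} {Y : Matrix K H ℂ} {Z : Matrix H K ℂ}
    {W : Matrix H H ℂ} (h : (Matrix.fromBlocks X Y Z W).PosSemidef) : W.PosSemidef := by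
  refine Matrix.PosSemidef.of_dotProduct_mulVec_nonneg ?_ ?_
  · have h1 := h.1
    unfold Matrix.IsHermitian at h1
    rw [Matrix.fromBlocks_conjTranspose] at h1
    have := congrArg Matrix.toBlocks₂₂ h1
    exact (by simpa [Matrix.toBlocks_fromBlocks₂₂] using this : Wᴴ = W)
  · intro y
    have h2 := h.dotProduct_mulVec_nonneg (Sum.elim 0 y)
    have : star (Sum.elim (0 : K → ℂ) y) = Sum.elim (0 : K → ℂ) (star y) := by
      rw [Function.star_sumElim]; simp
    rw [this, Matrix.fromBlocks_mulVec, sumElim_dotProduct_sumElim] at h2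
    simpa using h2

lemma opJensen (f : ℝ → ℝ) (hf : OperatorConvexOn (Set.Ioi 0) f)
    (M : Matrix K K ℂ) (hM : M.PosDef) (V : Matrix K H ℂ) (hV : Vᴴ * V = 1) :
    (Vᴴ * applyFun f M * V - applyFun f (Vᴴ * M * V)).PosSemidef := by
  classical
  set P : Matrix K K ℂ := V * Vᴴ with hPdef
  have hPP : P * P = P := by
    rw [hPdef, Matrix.mul_assoc, ← Matrix.mul_assoc Vᴴ, hV, Matrix.one_mul]
  set D : Matrix K K ℂ := 1 - P with hDdef
  have hDV : D * V = 0 := by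
    rw [hDdef, Matrix.sub_mul, Matrix.one_mul, hPdef, Matrix.mul_assoc, hV, Matrix.mul_one,
      sub_self]
  have hVD : Vᴴ * D = 0 := by
    rw [hDdef, Matrix.mul_sub, Matrix.mul_one, hPdef, ← Matrix.mul_assoc, hV, Matrix.one_mul,
      sub_self]
  have hDD : D * D = D := by
    rw [hDdef, Matrix.sub_mul, Matrix.mul_sub, Matrix.mul_sub, Matrix.one_mul, Matrix.mul_one,
      hPP]
    rw [Matrix.one_mul]
    abel
  have hDH : Dᴴ = D := by
    rw [hDdef, Matrix.conjTranspose_sub, Matrix.conjTranspose_one, hPdef,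
      Matrix.conjTranspose_mul, Matrix.conjTranspose_conjTranspose]
  set U : Matrix (K ⊕ H) (K ⊕ H) ℂ := Matrix.fromBlocks D V Vᴴ 0 with hUdef
  set W : Matrix (K ⊕ H) (K ⊕ H) ℂ := Matrix.fromBlocks D (-V) (-Vᴴ) 0 with hWdef
  have hUH : star U = U := by
    rw [Matrix.star_eq_conjTranspose, hUdef, Matrix.fromBlocks_conjTranspose, hDH,
      Matrix.conjTranspose_conjTranspose, Matrix.conjTranspose_zero]
  have hWH : star W = W := by
    rw [Matrix.star_eq_conjTranspose, hWdef, Matrix.fromBlocks_conjTranspose, hDH,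
      Matrix.conjTranspose_neg, Matrix.conjTranspose_neg,
      Matrix.conjTranspose_conjTranspose, Matrix.conjTranspose_zero]
  have hDPD : D * D + V * Vᴴ = 1 := by
    rw [hDD, hDdef]; abel
  have hUU : U * U = 1 := by
    rw [hUdef, Matrix.fromBlocks_multiply]
    rw [show D * D + V * Vᴴ = 1 from hDPD, hDV, hVD, hV]
    simp [Matrix.fromBlocks_one]
  have hWW : W * W = 1 := by
    rw [hWdef, Matrix.fromBlocks_multiply]
    simp only [Matrix.mul_neg, Matrix.neg_mul, neg_neg, hDV, hVD, hV, neg_zero,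
      Matrix.mul_zero, Matrix.zero_mul, add_zero, zero_add]
    rw [hDPD]
    simp [Matrix.fromBlocks_one]
  set T : Matrix (K ⊕ H) (K ⊕ H) ℂ := Matrix.fromBlocks M 0 0 1 with hTdef
  have hTpd : T.PosDef := posDef_fromBlocks hM Matrix.PosDef.one
  set A₁ : Matrix (K ⊕ H) (K ⊕ H) ℂ := star U * T * U with hA1def
  set A₂ : Matrix (K ⊕ H) (K ⊕ H) ℂ := star W * T * W with hA2def
  have hA1pd : A₁.PosDef := posDef_conj hTpd U (by rw [hUH, hUU])
  have hA2pd : A₂.PosDef := posDef_conj hTpd W (by rw [hWH, hWW])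
  set e : (K ⊕ H) ≃ Fin (Fintype.card (K ⊕ H)) := Fintype.equivFin _ with hedef
  have hB1pd : (Matrix.reindex e e A₁).PosDef := posDef_reindex e hA1pd
  have hB2pd : (Matrix.reindex e e A₂).PosDef := posDef_reindex e hA2pd
  have key := hf (Fintype.card (K ⊕ H)) (Matrix.reindex e e A₁) (Matrix.reindex e e A₂)
    hB1pd.1 hB2pd.1 (fun i => Set.mem_Ioi.mpr (hB1pd.eigenvalues_pos i))
    (fun i => Set.mem_Ioi.mpr (hB2pd.eigenvalues_pos i)) (1/2) (by norm_num) (by norm_num)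
  set c : ℂ := ((1/2 : ℝ) : ℂ) with hcdef
  have hc2 : ((1 - 1/2 : ℝ) : ℂ) = c := by rw [hcdef]; norm_num
  rw [hc2] at key
  -- transport out of the reindexing
  have hr1 : applyFun f (Matrix.reindex e e A₁) = Matrix.reindex e e (applyFun f A₁) :=
    applyFun_reindex e hA1pd.1
  have hr2 : applyFun f (Matrix.reindex e e A₂) = Matrix.reindex e e (applyFun f A₂) :=
    applyFun_reindex e hA2pd.1
  have hcombH : (c • A₁ + c • A₂).IsHermitian := by
    have h1 : (c • A₁).IsHermitian := by
      unfold Matrix.IsHermitian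
      rw [Matrix.conjTranspose_smul, hA1pd.1.eq]
      congr 1
      rw [hcdef]
      simp [starRingEnd_apply]
    have h2 : (c • A₂).IsHermitian := by
      unfold Matrix.IsHermitian
      rw [Matrix.conjTranspose_smul, hA2pd.1.eq]
      congr 1
      rw [hcdef]
      simp [starRingEnd_apply]
    exact h1.add h2
  have hrc : c • Matrix.reindex e e A₁ + c • Matrix.reindex e e A₂
      = Matrix.reindex e e (c • A₁ + c • A₂) := by
    simp [Matrix.reindex_apply, Matrix.submatrix_add, Matrix.submatrix_smul]
  rw [hr1, hr2, hrc, applyFun_reindex e hcombH] at key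
  have hrG : c • Matrix.reindex e e (applyFun f A₁) + c • Matrix.reindex e e (applyFun f A₂)
        - Matrix.reindex e e (applyFun f (c • A₁ + c • A₂))
      = Matrix.reindex e e (c • applyFun f A₁ + c • applyFun f A₂
        - applyFun f (c • A₁ + c • A₂)) := by
    simp [Matrix.reindex_apply, Matrix.submatrix_add, Matrix.submatrix_smul,
      Matrix.submatrix_sub]
  rw [hrG, Matrix.reindex_apply] at key
  have keyG : (c • applyFun f A₁ + c • applyFun f A₂
      - applyFun f (c • A₁ + c • A₂)).PosSemidef :=
    (Matrix.posSemidef_submatrix_equiv e.symm).mp key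
  -- block computations
  have hA1blocks : A₁ = Matrix.fromBlocks (D*M*D + V*Vᴴ) (D*M*V) (Vᴴ*M*D) (Vᴴ*M*V) := by
    rw [hA1def, hUH, hUdef, hTdef, Matrix.fromBlocks_multiply, Matrix.fromBlocks_multiply]
    congr 1 <;> simp [Matrix.mul_assoc]
  have hA2blocks : A₂ = Matrix.fromBlocks (D*M*D + V*Vᴴ) (-(D*M*V)) (-(Vᴴ*M*D)) (Vᴴ*M*V) := by
    rw [hA2def, hWH, hWdef, hTdef, Matrix.fromBlocks_multiply, Matrix.fromBlocks_multiply]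
    congr 1 <;> simp [Matrix.mul_assoc]
  have hcomb : c • A₁ + c • A₂ = Matrix.fromBlocks (D*M*D + V*Vᴴ) 0 0 (Vᴴ*M*V) := by
    rw [hA1blocks, hA2blocks]
    ext i j
    rcases i with i | i <;> rcases j with j | j <;>
      · simp [Matrix.add_apply, Matrix.smul_apply, Matrix.neg_apply, smul_eq_mul, hcdef]
        try push_cast
        try ring
  set F : Matrix K K ℂ := applyFun f M with hFdef
  set G1 : Matrix H H ℂ := applyFun f (1 : Matrix H H ℂ) with hG1def
  have hfT : applyFun f T = Matrix.fromBlocks F 0 0 G1 := by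
    rw [hTdef]
    exact applyFun_fromBlocks hM.1 Matrix.isHermitian_one
  have hfA1 : applyFun f A₁ = U * Matrix.fromBlocks F 0 0 G1 * U := by
    rw [hA1def, applyFun_conj hTpd.1 U (by rw [hUH, hUU]) (by rw [hUH, hUU]), hUH, hfT]
  have hfA2 : applyFun f A₂ = W * Matrix.fromBlocks F 0 0 G1 * W := by
    rw [hA2def, applyFun_conj hTpd.1 W (by rw [hWH, hWW]) (by rw [hWH, hWW]), hWH, hfT]
  have hfA1b : applyFun f A₁
      = Matrix.fromBlocks (D*F*D + V*G1*Vᴴ) (D*F*V) (Vᴴ*F*D) (Vᴴ*F*V) := by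
    rw [hfA1, hUdef, Matrix.fromBlocks_multiply, Matrix.fromBlocks_multiply]
    congr 1 <;> simp [Matrix.mul_assoc]
  have hfA2b : applyFun f A₂
      = Matrix.fromBlocks (D*F*D + V*G1*Vᴴ) (-(D*F*V)) (-(Vᴴ*F*D)) (Vᴴ*F*V) := by
    rw [hfA2, hWdef, Matrix.fromBlocks_multiply, Matrix.fromBlocks_multiply]
    congr 1 <;> simp [Matrix.mul_assoc]
  have hsum : c • applyFun f A₁ + c • applyFun f A₂
      = Matrix.fromBlocks (D*F*D + V*G1*Vᴴ) 0 0 (Vᴴ*F*V) := by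
    rw [hfA1b, hfA2b]
    ext i j
    rcases i with i | i <;> rcases j with j | j <;>
      · simp [Matrix.add_apply, Matrix.smul_apply, Matrix.neg_apply, smul_eq_mul, hcdef]
        try push_cast
        try ring
  have hDMDH : (D*M*D + V*Vᴴ).IsHermitian := by
    unfold Matrix.IsHermitian
    rw [Matrix.conjTranspose_add, Matrix.conjTranspose_mul, Matrix.conjTranspose_mul, hDH,
      hM.1.eq, Matrix.conjTranspose_mul, Matrix.conjTranspose_conjTranspose, Matrix.mul_assoc]
  have hfcombb : applyFun f (c • A₁ + c • A₂)
      = Matrix.fromBlocks (applyFun f (D*M*D + V*Vᴴ)) 0 0 (applyFun f (Vᴴ*M*V)) := by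
    rw [hcomb]
    exact applyFun_fromBlocks hDMDH (isHermitian_conj_rect hM.1 V)
  have hfinal : c • applyFun f A₁ + c • applyFun f A₂ - applyFun f (c • A₁ + c • A₂)
      = Matrix.fromBlocks (D*F*D + V*G1*Vᴴ - applyFun f (D*M*D + V*Vᴴ)) 0 0
        (Vᴴ*F*V - applyFun f (Vᴴ*M*V)) := by
    rw [hsum, hfcombb]
    ext i j
    rcases i with i | i <;> rcases j with j | j <;>
      simp [Matrix.fromBlocks, Matrix.sub_apply]
  rw [hfinal] at keyG
  exact posSemidef_corner keyG

end S4

section S5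
variable {α β : Type*} [Fintype α] [DecidableEq α] [Fintype β] [DecidableEq β]

lemma kron_mulVec (M : Matrix α α ℂ) (N : Matrix β β ℂ) (X : Matrix α β ℂ) :
    (M ⊗ₖ Nᵀ) *ᵥ vecOf X = vecOf (M * X * N) := by
  funext p
  rcases p with ⟨i, j⟩
  simp only [Matrix.mulVec, dotProduct, vecOf, Fintype.sum_prod_type,
    Matrix.kroneckerMap_apply, Matrix.transpose_apply, Matrix.mul_apply]
  rw [Finset.sum_comm]
  refine Finset.sum_congr rfl fun l _ => ?_
  rw [Finset.sum_mul]
  exact Finset.sum_congr rfl fun k _ => by ring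

def EM (α β : Type*) [DecidableEq α] [DecidableEq β] :
    Matrix ((α × β) × (α × β)) (α × α) ℂ :=
  Matrix.of fun p q => if p.1.1 = q.1 ∧ p.2.1 = q.2 ∧ p.1.2 = p.2.2 then 1 else 0

lemma EM_mulVec (X : Matrix α α ℂ) :
    EM α β *ᵥ vecOf X = vecOf (X ⊗ₖ (1 : Matrix β β ℂ)) := by
  funext p
  rcases p with ⟨⟨a, b⟩, ⟨a', b'⟩⟩
  simp [Matrix.mulVec, dotProduct, EM, vecOf, Matrix.of_apply,
    Fintype.sum_prod_type, Matrix.kroneckerMap_apply, Matrix.one_apply, ite_and,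
    mul_ite, ite_mul, zero_mul, mul_zero, mul_one, Finset.sum_ite_eq,
    Finset.sum_ite_eq']

lemma EM_mid1 (N : Matrix (α × β) (α × β) ℂ) :
    (EM α β)ᴴ * (N ⊗ₖ (1 : Matrix (α × β) (α × β) ℂ)) * EM α β
      = (ptraceB N) ⊗ₖ (1 : Matrix α α ℂ) := by
  ext ⟨x, y⟩ ⟨x', y'⟩
  simp [Matrix.mul_apply, Matrix.conjTranspose_apply, EM, Matrix.of_apply,
    Fintype.sum_prod_type, Matrix.kroneckerMap_apply, Matrix.one_apply, ite_and,
    mul_ite, ite_mul, zero_mul, mul_zero, mul_one, one_mul, Finset.sum_ite_eq,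
    Finset.sum_ite_eq', apply_ite, star_one, star_zero, ptraceB,
    Prod.mk.injEq]
  split <;> rename_i h <;> intro h2
  · exact (h2 h.symm).elim
  · exact (h h2.symm).elim

lemma EM_mid2 (N : Matrix (α × β) (α × β) ℂ) :
    (EM α β)ᴴ * ((1 : Matrix (α × β) (α × β) ℂ) ⊗ₖ N) * EM α β
      = (1 : Matrix α α ℂ) ⊗ₖ (ptraceB N) := by
  ext ⟨x, y⟩ ⟨x', y'⟩
  simp [Matrix.mul_apply, Matrix.conjTranspose_apply, EM, Matrix.of_apply,
    Fintype.sum_prod_type, Matrix.kroneckerMap_apply, Matrix.one_apply, ite_and,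
    mul_ite, ite_mul, zero_mul, mul_zero, mul_one, one_mul, Finset.sum_ite_eq,
    Finset.sum_ite_eq', apply_ite, star_one, star_zero, ptraceB,
    Prod.mk.injEq]
  split <;> rename_i h <;> intro h2
  · exact (h2 h.symm).elim
  · exact (h h2.symm).elim

lemma ptraceB_transpose (N : Matrix (α × β) (α × β) ℂ) :
    ptraceB (Nᵀ) = (ptraceB N)ᵀ := by
  ext i j
  simp [ptraceB, Matrix.transpose_apply]

end S5

section S6
variable {α β : Type*} [Fintype α] [DecidableEq α] [Fintype β] [DecidableEq β]

lemma kron_conjTranspose (M : Matrix α α ℂ) (N : Matrix β β ℂ) :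
    (M ⊗ₖ N)ᴴ = Mᴴ ⊗ₖ Nᴴ := by
  ext ⟨i, j⟩ ⟨k, l⟩
  simp [Matrix.conjTranspose_apply, Matrix.kroneckerMap_apply, star_mul', mul_comm]

lemma dot_conj_rect {K H : Type*} [Fintype K] [Fintype H]
    (V : Matrix K H ℂ) (F : Matrix K K ℂ) (x : H → ℂ) :
    star x ⬝ᵥ ((Vᴴ * F * V) *ᵥ x) = star (V *ᵥ x) ⬝ᵥ (F *ᵥ (V *ᵥ x)) := by
  rw [Matrix.star_mulVec, ← Matrix.dotProduct_mulVec, Matrix.mulVec_mulVec,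
    Matrix.mulVec_mulVec, Matrix.mul_assoc]

lemma posDef_kron {M : Matrix α α ℂ} {N : Matrix β β ℂ} (hM : M.PosDef) (hN : N.PosDef) :
    (M ⊗ₖ N).PosDef := by
  classical
  have hherm : (M ⊗ₖ N).IsHermitian := by
    unfold Matrix.IsHermitian
    rw [kron_conjTranspose, hM.1.eq, hN.1.eq]
  set a := msqrt M with hadef
  set b := msqrt N with hbdef
  have ha : a * a = M := msqrt_mul_self hM.posSemidef
  have hb : b * b = N := msqrt_mul_self hN.posSemidef
  have haH : aᴴ = a := (msqrt_isHermitian hM.posSemidef).eq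
  have hbH : bᴴ = b := (msqrt_isHermitian hN.posSemidef).eq
  have hau : IsUnit a.det := by
    have h1 : a.det * a.det = M.det := by rw [← Matrix.det_mul, ha]
    exact isUnit_of_mul_isUnit_left (h1 ▸ hM.det_pos.ne'.isUnit)
  have hbu : IsUnit b.det := by
    have h1 : b.det * b.det = N.det := by rw [← Matrix.det_mul, hb]
    exact isUnit_of_mul_isUnit_left (h1 ▸ hN.det_pos.ne'.isUnit)
  set C := a ⊗ₖ b with hCdef
  have hCH : Cᴴ = C := by rw [hCdef, kron_conjTranspose, haH, hbH]
  have hCC : C * C = M ⊗ₖ N := by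
    rw [hCdef]
    conv_rhs => rw [← ha, ← hb, Matrix.mul_kronecker_mul]
  have hCu : IsUnit C.det := by
    rw [hCdef, Matrix.det_kronecker]
    exact (hau.pow _).mul (hbu.pow _)
  refine Matrix.PosDef.of_dotProduct_mulVec_pos hherm (fun x hx => ?_)
  have hCx : C *ᵥ x ≠ 0 := by
    intro h
    exact hx ((Matrix.mulVec_injective_iff_isUnit.mpr (Matrix.isUnit_iff_isUnit_det _ |>.2 hCu)).eq_iff'
      (by rw [Matrix.mulVec_zero]) |>.mp h)
  have key : star x ⬝ᵥ ((M ⊗ₖ N) *ᵥ x) = star (C *ᵥ x) ⬝ᵥ (C *ᵥ x) := by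
    rw [← hCC, show C * C = Cᴴ * C from by rw [hCH], ← Matrix.mulVec_mulVec,
      Matrix.dotProduct_mulVec, ← Matrix.star_mulVec]
  rw [key]
  exact Matrix.dotProduct_star_self_pos_iff.mpr hCx

end S6

lemma kron_sandwich {α β : Type*} [Fintype α] [DecidableEq α] [Fintype β] [DecidableEq β]
    (X : Matrix β β ℂ) (S : Matrix α α ℂ) (Y : Matrix β β ℂ) :
    ((1 : Matrix α α ℂ) ⊗ₖ X) * (S ⊗ₖ Y) * ((1 : Matrix α α ℂ) ⊗ₖ X)
      = S ⊗ₖ (X * Y * X) := by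
  rw [← Matrix.mul_kronecker_mul, ← Matrix.mul_kronecker_mul, Matrix.one_mul, Matrix.mul_one]

/-- monotonicity of the quantum f-relative entropy under partial trace. -/
theorem Srel_monotone_partialTrace {dA dB : ℕ} (f : ℝ → ℝ)
    (hf : OperatorConvexOn (Set.Ioi 0) f)
    (ρAB σAB : Matrix (Fin dA × Fin dB) (Fin dA × Fin dB) ℂ)
    (hρ : ρAB.PosDef) (hσ : σAB.PosDef)
    (hρA : (ptraceB ρAB).PosDef) (hσA : (ptraceB σAB).PosDef) :
    Srel f (ptraceB ρAB) (ptraceB σAB) ≤ Srel f ρAB σAB := by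
  classical
  have hρps : ρAB.PosSemidef := hρ.posSemidef
  have hρAps : (ptraceB ρAB).PosSemidef := hρA.posSemidef
  set ρA : Matrix (Fin dA) (Fin dA) ℂ := ptraceB ρAB with hρAdef
  set σA : Matrix (Fin dA) (Fin dA) ℂ := ptraceB σAB with hσAdef
  set R : Matrix (Fin dA × Fin dB) (Fin dA × Fin dB) ℂ := msqrt ρAB with hRdef
  set s : Matrix (Fin dA) (Fin dA) ℂ := msqrt ρA with hsdef
  have hRH : R.IsHermitian := msqrt_isHermitian hρps
  have hsH : s.IsHermitian := msqrt_isHermitian hρAps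
  have hRR : R * R = ρAB := msqrt_mul_self hρps
  have hss : s * s = ρA := msqrt_mul_self hρAps
  have hRu : IsUnit R.det := by
    have h1 : R.det * R.det = ρAB.det := by rw [← Matrix.det_mul, hRR]
    exact isUnit_of_mul_isUnit_left (h1 ▸ hρ.det_pos.ne'.isUnit)
  have hsu : IsUnit s.det := by
    have h1 : s.det * s.det = ρA.det := by rw [← Matrix.det_mul, hss]
    exact isUnit_of_mul_isUnit_left (h1 ▸ hρA.det_pos.ne'.isUnit)
  have hsinvH : (s⁻¹).IsHermitian := by
    unfold Matrix.IsHermitian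
    rw [Matrix.conjTranspose_nonsing_inv, hsH.eq]
  have hRρR : R * ρAB⁻¹ * R = 1 := by
    rw [← hRR, Matrix.mul_inv_rev]
    simp only [Matrix.mul_assoc]
    rw [Matrix.nonsing_inv_mul _ hRu, Matrix.mul_one, Matrix.mul_nonsing_inv _ hRu]
  have hsρs : s⁻¹ * ρA * s⁻¹ = 1 := by
    rw [← hss]
    simp only [Matrix.mul_assoc]
    rw [Matrix.mul_nonsing_inv _ hsu, Matrix.mul_one, Matrix.nonsing_inv_mul _ hsu]
  have hρAinv : ρA⁻¹ = s⁻¹ * s⁻¹ := by rw [← hss, Matrix.mul_inv_rev]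
  have trans3 : ∀ {γ : Type} [Fintype γ] [DecidableEq γ] (X Y : Matrix γ γ ℂ),
      Xᵀ * Yᵀ * Xᵀ = (X * Y * X)ᵀ := by
    intro γ _ _ X Y
    rw [Matrix.transpose_mul, Matrix.transpose_mul, Matrix.mul_assoc]
  set P : Matrix ((Fin dA × Fin dB) × (Fin dA × Fin dB))
      ((Fin dA × Fin dB) × (Fin dA × Fin dB)) ℂ
    := (1 : Matrix (Fin dA × Fin dB) (Fin dA × Fin dB) ℂ) ⊗ₖ Rᵀ with hPdef
  set Q : Matrix (Fin dA × Fin dA) (Fin dA × Fin dA) ℂ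
    := (1 : Matrix (Fin dA) (Fin dA) ℂ) ⊗ₖ (s⁻¹)ᵀ with hQdef
  set V := P * EM (Fin dA) (Fin dB) * Q with hVdef
  have hPH : Pᴴ = P := by
    rw [hPdef, kron_conjTranspose, Matrix.conjTranspose_one, hRH.transpose.eq]
  have hQH : Qᴴ = Q := by
    rw [hQdef, kron_conjTranspose, Matrix.conjTranspose_one, hsinvH.transpose.eq]
  have hVH : Vᴴ = Q * (EM (Fin dA) (Fin dB))ᴴ * P := by
    rw [hVdef, Matrix.conjTranspose_mul, Matrix.conjTranspose_mul, hPH, hQH, Matrix.mul_assoc]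
  have hVV : Vᴴ * V = 1 := by
    have h1 : Vᴴ * V = Q * ((EM (Fin dA) (Fin dB))ᴴ * ((P * P) * EM (Fin dA) (Fin dB))) * Q := by
      rw [hVH, hVdef]
      simp only [Matrix.mul_assoc]
    have hPP : P * P = (1 : Matrix (Fin dA × Fin dB) (Fin dA × Fin dB) ℂ) ⊗ₖ (ρAB)ᵀ := by
      rw [hPdef, ← Matrix.mul_kronecker_mul, Matrix.one_mul, ← Matrix.transpose_mul, hRR]
    rw [h1, hPP, ← Matrix.mul_assoc ((EM (Fin dA) (Fin dB))ᴴ), EM_mid2, ptraceB_transpose]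
    rw [hQdef, kron_sandwich, trans3, hsρs, Matrix.transpose_one, Matrix.one_kronecker_one]
  have hVMV : Vᴴ * (σAB ⊗ₖ (ρAB⁻¹)ᵀ) * V = σA ⊗ₖ (ρA⁻¹)ᵀ := by
    have h1 : Vᴴ * (σAB ⊗ₖ (ρAB⁻¹)ᵀ) * V
        = Q * ((EM (Fin dA) (Fin dB))ᴴ * ((P * (σAB ⊗ₖ (ρAB⁻¹)ᵀ) * P) * EM (Fin dA) (Fin dB)))
          * Q := by
      rw [hVH, hVdef]
      simp only [Matrix.mul_assoc]
    have hmid : P * (σAB ⊗ₖ (ρAB⁻¹)ᵀ) * P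
        = σAB ⊗ₖ (1 : Matrix (Fin dA × Fin dB) (Fin dA × Fin dB) ℂ) := by
      rw [hPdef, kron_sandwich, trans3, hRρR, Matrix.transpose_one]
    rw [h1, hmid, ← Matrix.mul_assoc ((EM (Fin dA) (Fin dB))ᴴ), EM_mid1]
    rw [hQdef, kron_sandwich, Matrix.mul_one, ← Matrix.transpose_mul, ← hρAinv, ← hσAdef]
  have hVw : V *ᵥ vecOf s = vecOf R := by
    rw [hVdef, ← Matrix.mulVec_mulVec, ← Matrix.mulVec_mulVec, hQdef, kron_mulVec,
      Matrix.one_mul, Matrix.mul_nonsing_inv _ hsu, EM_mulVec, Matrix.one_kronecker_one,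
      hPdef, kron_mulVec, Matrix.one_mul, Matrix.one_mul]
  have hMpd : (σAB ⊗ₖ (ρAB⁻¹)ᵀ).PosDef := posDef_kron hσ (hρ.inv.transpose)
  have hJ := opJensen f hf (σAB ⊗ₖ (ρAB⁻¹)ᵀ) hMpd V hVV
  rw [hVMV] at hJ
  have h0 := hJ.dotProduct_mulVec_nonneg (vecOf s)
  rw [Matrix.sub_mulVec, dotProduct_sub, sub_nonneg] at h0
  rw [dot_conj_rect, hVw] at h0
  show (star (vecOf (msqrt ρA)) ⬝ᵥ (applyFun f (σA ⊗ₖ (ρA⁻¹)ᵀ) *ᵥ vecOf (msqrt ρA))).re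
    ≤ (star (vecOf (msqrt ρAB)) ⬝ᵥ (applyFun f (σAB ⊗ₖ (ρAB⁻¹)ᵀ) *ᵥ vecOf (msqrt ρAB))).re
  rw [← hRdef, ← hsdef]
  exact (Complex.le_def.mp h0).1
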